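/- Let A be a symmetric linear endomorphism of E having at least one positive and at least one negative eigenvalue and no zero eigenvalue. Let U be the sum of the eigenspaces of A corresponding to positive eigenvalues, m₊(A) the smallest positive eigenvalue of A, and m₋(A) the smallest positive eigenvalue of −A. Fix an integer ℓ with dim U ≤ ℓ ≤ dim E, and let K be a set of ℓ-dimensional subspaces of E such that { P_V : V ∈ K } is compact in the space of endomorphisms of E and every V ∈ K satisfies U ∩ V⊥ = 0. Then there exists a constant C > 0 such that δ(U, exp(tA)·V) ≤ C e^{−(m₊(A) + m₋(A)) t} for all V ∈ K and all t ≥ 0. -/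

import Mathlib

open Module Submodule
open scoped RealInnerProductSpace

noncomputable section

variable {E : Type*} [NormedAddCommGroup E] [InnerProductSpace ℝ E] [FiniteDimensional ℝ E]

/-- The orthogonal projection onto a subspace `U`, viewed as a continuous linear
endomorphism of `E`. -/
noncomputable def projCLM (U : Submodule ℝ E) : E →L[ℝ] E :=
  U.subtypeL.comp (orthogonalProjection U)

/-- The gap `δ(U,V) := ‖P_U - P_V ∘ P_U‖` between two subspaces. -/
noncomputable def gap (U V : Submodule ℝ E) : ℝ :=
  ‖projCLM U - (projCLM V).comp (projCLM U)‖

/-- The exponential of a continuous linear endomorphism. -/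
noncomputable def expEnd {V : Type*} [NormedAddCommGroup V] [NormedSpace ℝ V]
    (B : V →L[ℝ] V) : V →L[ℝ] V :=
  NormedSpace.exp B

/-- The sum of the eigenspaces of `A` corresponding to positive eigenvalues. -/
noncomputable def posSpace (A : E →L[ℝ] E) : Submodule ℝ E :=
  ⨆ μ ∈ Set.Ioi (0 : ℝ), Module.End.eigenspace (A : E →ₗ[ℝ] E) μ

lemma expEnd_apply_eigen (B : E →L[ℝ] E) {c : ℝ} {x : E} (h : B x = c • x) :
    expEnd B x = Real.exp c • x := by
  have hpow : ∀ n : ℕ, (B ^ n) x = c ^ n • x := by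
    intro n; induction n with
    | zero => simp
    | succ n ih =>
      rw [pow_succ, ContinuousLinearMap.mul_apply, h, map_smul, ih, smul_smul, pow_succ,
        mul_comm]
  have hs : Summable fun n : ℕ => ((Nat.factorial n : ℝ))⁻¹ • B ^ n :=
    NormedSpace.expSeries_summable' B
  have hs' : Summable fun n : ℕ => ((Nat.factorial n : ℝ))⁻¹ * c ^ n := by
    simpa [smul_eq_mul] using NormedSpace.expSeries_summable' (𝕂 := ℝ) c
  calc expEnd B x = (∑' n : ℕ, ((Nat.factorial n : ℝ))⁻¹ • B ^ n) x := by
        rw [expEnd, NormedSpace.exp_eq_tsum ℝ]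
    _ = ∑' n : ℕ, (((Nat.factorial n : ℝ))⁻¹ • B ^ n) x :=
        (ContinuousLinearMap.apply ℝ E x).map_tsum hs
    _ = ∑' n : ℕ, (((Nat.factorial n : ℝ))⁻¹ * c ^ n) • x := by
        refine tsum_congr fun n => ?_
        rw [ContinuousLinearMap.smul_apply, hpow, smul_smul]
    _ = (∑' n : ℕ, ((Nat.factorial n : ℝ))⁻¹ * c ^ n) • x := hs'.tsum_smul_const x
    _ = Real.exp c • x := by
        congr 1
        rw [Real.exp_eq_exp_ℝ, NormedSpace.exp_eq_tsum ℝ]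
        simp [smul_eq_mul]

lemma projCLM_apply_le (U : Submodule ℝ E) (x : E) : ‖projCLM U x‖ ≤ ‖x‖ := by
  have h1 : ‖projCLM U x‖ = ‖orthogonalProjection U x‖ := rfl
  rw [h1]
  calc ‖orthogonalProjection U x‖ ≤ ‖orthogonalProjection U‖ * ‖x‖ :=
        (orthogonalProjection U).le_opNorm x
    _ ≤ 1 * ‖x‖ := by
        gcongr
        exact orthogonalProjection_norm_le U
    _ = ‖x‖ := one_mul _

set_option maxHeartbeats 2000000 in
theorem gap_exp_flow_decay_uniform (A : E →L[ℝ] E) (hA : IsSelfAdjoint A)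
    (hpos : ∃ μ : ℝ, 0 < μ ∧ Module.End.HasEigenvalue (A : E →ₗ[ℝ] E) μ)
    (hneg : ∃ μ : ℝ, μ < 0 ∧ Module.End.HasEigenvalue (A : E →ₗ[ℝ] E) μ)
    (hzero : ¬ Module.End.HasEigenvalue (A : E →ₗ[ℝ] E) 0)
    (mp mm : ℝ)
    (hmp : IsLeast {μ : ℝ | 0 < μ ∧ Module.End.HasEigenvalue (A : E →ₗ[ℝ] E) μ} mp)
    (hmm : IsLeast {μ : ℝ | 0 < μ ∧ Module.End.HasEigenvalue (-(A : E →ₗ[ℝ] E)) μ} mm)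
    (ℓ : ℕ) (hl1 : finrank ℝ (posSpace A) ≤ ℓ) (hl2 : ℓ ≤ finrank ℝ E)
    (K : Set (Submodule ℝ E))
    (hKdim : ∀ V ∈ K, finrank ℝ V = ℓ)
    (hKcpt : IsCompact (projCLM '' K))
    (hKtrans : ∀ V ∈ K, posSpace A ⊓ Vᗮ = ⊥) :
    ∃ C : ℝ, 0 < C ∧ ∀ V ∈ K, ∀ t : ℝ, 0 ≤ t →
      gap (posSpace A) (Submodule.map (expEnd (t • A) : E →ₗ[ℝ] E) V)
        ≤ C * Real.exp (-(mp + mm) * t) := by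
  classical
  set U := posSpace A with hUdef
  have hTsymm : (A : E →ₗ[ℝ] E).IsSymmetric :=
    ContinuousLinearMap.isSelfAdjoint_iff_isSymmetric.mp hA
  have hn' : finrank ℝ E = finrank ℝ E := rfl
  set b := hTsymm.eigenvectorBasis hn' with hbdef
  set lam := hTsymm.eigenvalues hn' with hlamdef
  have hbA : ∀ i, A (b i) = lam i • b i := fun i => hTsymm.apply_eigenvectorBasis hn' i
  have hlam_eig : ∀ i, Module.End.HasEigenvalue (A : E →ₗ[ℝ] E) (lam i) :=
    fun i => hTsymm.hasEigenvalue_eigenvalues hn' i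
  have hlam_ne : ∀ i, lam i ≠ 0 := fun i h => hzero (h ▸ hlam_eig i)
  have hmp0 : 0 < mp := hmp.1.1
  have hmm0 : 0 < mm := hmm.1.1
  have hlam_posb : ∀ i, 0 < lam i → mp ≤ lam i := fun i h => hmp.2 ⟨h, hlam_eig i⟩
  have hlam_negb : ∀ i, lam i < 0 → lam i ≤ -mm := by
    intro i h
    have heq : Module.End.eigenspace (-(A : E →ₗ[ℝ] E)) (-lam i)
        = Module.End.eigenspace (A : E →ₗ[ℝ] E) (lam i) := by
      ext x
      rw [Module.End.mem_eigenspace_iff, Module.End.mem_eigenspace_iff]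
      constructor
      · intro hx
        have := congrArg Neg.neg hx
        simpa using this
      · intro hx
        simp [hx]
    have hev : Module.End.HasEigenvalue (-(A : E →ₗ[ℝ] E)) (-lam i) := by
      rw [Module.End.hasEigenvalue_iff, heq, ← Module.End.hasEigenvalue_iff]
      exact hlam_eig i
    have := hmm.2 ⟨neg_pos.mpr h, hev⟩
    linarith
  -- action of exp on coordinates
  have hrepr_exp : ∀ (s : ℝ) (x : E) (i),
      b.repr (expEnd (s • A) x) i = Real.exp (s * lam i) * b.repr x i := by
    intro s x i
    have hx : expEnd (s • A) x = ∑ j, (Real.exp (s * lam j) * b.repr x j) • b j := by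
      conv_lhs => rw [← b.sum_repr x]
      rw [map_sum]
      refine Finset.sum_congr rfl fun j _ => ?_
      rw [map_smul, expEnd_apply_eigen (s • A)
        (by rw [ContinuousLinearMap.smul_apply, hbA j, smul_smul]), smul_smul, mul_comm]
    rw [b.repr_apply_apply, hx, inner_sum]
    rw [Finset.sum_eq_single i]
    · rw [real_inner_smul_right, real_inner_self_eq_norm_sq, b.orthonormal.1 i]
      simp [b.repr_apply_apply]
    · intro j _ hj
      rw [real_inner_smul_right, b.orthonormal.2 (Ne.symm hj)]
      ring
    · intro h
      exact absurd (Finset.mem_univ i) h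
  -- membership characterizations
  have hmemU : ∀ x : E, x ∈ U ↔ ∀ i, lam i < 0 → b.repr x i = 0 := by
    have hZ : ∀ (x : E), x ∈ U → ∀ i, lam i < 0 → b.repr x i = 0 := by
      let Z : Submodule ℝ E :=
        { carrier := {x | ∀ i, lam i < 0 → b.repr x i = 0}
          add_mem' := by
            intro x y hx hy i hi
            rw [map_add]
            show b.repr x i + b.repr y i = 0
            rw [hx i hi, hy i hi, add_zero]
          zero_mem' := by intro i hi; rw [map_zero]; rfl
          smul_mem' := by
            intro c x hx i hi
            rw [map_smul]
            show c * b.repr x i = 0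
            rw [hx i hi, mul_zero] }
      have hle : U ≤ Z := by
        rw [hUdef, posSpace]
        refine iSup₂_le fun μ hμ => ?_
        intro x hx i hi
        have hμ0 : (0 : ℝ) < μ := hμ
        have hTx : (A : E →ₗ[ℝ] E) x = μ • x := Module.End.mem_eigenspace_iff.mp hx
        have hsym := hTsymm (b i) x
        rw [show (A : E →ₗ[ℝ] E) (b i) = A (b i) from rfl, hbA i, hTx,
          real_inner_smul_left, real_inner_smul_right] at hsym
        have hne : lam i - μ ≠ 0 := by intro hc; nlinarith
        have hprod : (lam i - μ) * (inner ℝ (b i) x : ℝ) = 0 := by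
          have := hsym
          nlinarith [hsym]
        rw [b.repr_apply_apply]
        exact (mul_eq_zero.mp hprod).resolve_left hne
      exact fun x hx => hle hx
    intro x
    refine ⟨hZ x, ?_⟩
    intro hx
    rw [← b.sum_repr x]
    refine Submodule.sum_mem _ fun i _ => ?_
    rcases lt_trichotomy (lam i) 0 with h | h | h
    · rw [hx i h, zero_smul]; exact Submodule.zero_mem _
    · exact absurd h (hlam_ne i)
    · refine Submodule.smul_mem _ _ ?_
      have hmem : b i ∈ Module.End.eigenspace (A : E →ₗ[ℝ] E) (lam i) :=
        (hTsymm.hasEigenvector_eigenvectorBasis hn' i).1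
      have hle : Module.End.eigenspace (A : E →ₗ[ℝ] E) (lam i) ≤ U := by
        rw [hUdef, posSpace]
        exact le_biSup _ h
      exact hle hmem
  have hmemUperp : ∀ x : E, x ∈ Uᗮ ↔ ∀ i, 0 < lam i → b.repr x i = 0 := by
    intro x
    constructor
    · intro hx i hi
      have hbU : b i ∈ U := (hmemU (b i)).mpr (by
        intro j hj
        rcases eq_or_ne j i with rfl | hne
        · exact absurd hi (not_lt.mpr hj.le)
        · rw [b.repr_apply_apply, b.orthonormal.2 hne])
      rw [b.repr_apply_apply]
      exact (Submodule.mem_orthogonal U x).mp hx (b i) hbU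
    · intro hx
      rw [Submodule.mem_orthogonal]
      intro u hu
      have hu' := (hmemU u).mp hu
      have hinner : (inner ℝ u x : ℝ) = ∑ i, b.repr u i * b.repr x i := by
        rw [← b.repr.inner_map_map u x]
        simp only [PiLp.inner_apply, RCLike.inner_apply, conj_trivial]
        exact Finset.sum_congr rfl fun i _ => by ring
      rw [hinner]
      refine Finset.sum_eq_zero fun i _ => ?_
      rcases lt_trichotomy (lam i) 0 with h | h | h
      · rw [hu' i h, zero_mul]
      · exact absurd h (hlam_ne i)
      · rw [hx i h, mul_zero]
  -- norm estimate
  have hnormexp : ∀ (s : ℝ) (x : E) (c : ℝ), 0 ≤ c →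
      (∀ i, b.repr x i ≠ 0 → Real.exp (s * lam i) ≤ c) →
      ‖expEnd (s • A) x‖ ≤ c * ‖x‖ := by
    intro s x c hc hbound
    rw [← b.repr.norm_map (expEnd (s • A) x), ← b.repr.norm_map x]
    rw [EuclideanSpace.norm_eq, EuclideanSpace.norm_eq]
    rw [← Real.sqrt_sq hc, ← Real.sqrt_mul (sq_nonneg c)]
    apply Real.sqrt_le_sqrt
    rw [Finset.mul_sum]
    refine Finset.sum_le_sum fun i _ => ?_
    rw [hrepr_exp]
    by_cases h : b.repr x i = 0
    · simp [h]
    · have h1 : ‖Real.exp (s * lam i) * b.repr x i‖ ≤ c * ‖b.repr x i‖ := by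
        rw [norm_mul]
        gcongr
        rw [Real.norm_eq_abs, abs_of_pos (Real.exp_pos _)]
        exact hbound i h
      calc ‖Real.exp (s * lam i) * b.repr x i‖ ^ 2 ≤ (c * ‖b.repr x i‖) ^ 2 :=
            pow_le_pow_left₀ (norm_nonneg _) h1 2
        _ = c ^ 2 * ‖b.repr x i‖ ^ 2 := by ring
  have hexpU_mem : ∀ (s : ℝ) (y : E), y ∈ U → expEnd (s • A) y ∈ U := by
    intro s y hy
    refine (hmemU _).mpr fun i hi => ?_
    rw [hrepr_exp, (hmemU y).mp hy i hi, mul_zero]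
  have hexpU_norm : ∀ t : ℝ, 0 ≤ t → ∀ y ∈ U,
      ‖expEnd ((-t) • A) y‖ ≤ Real.exp (-(mp * t)) * ‖y‖ := by
    intro t ht y hy
    refine hnormexp _ _ _ (Real.exp_pos _).le fun i hne => ?_
    have hipos : 0 < lam i := by
      rcases lt_trichotomy (lam i) 0 with h | h | h
      · exact absurd ((hmemU y).mp hy i h) hne
      · exact absurd h (hlam_ne i)
      · exact h
    have := hlam_posb i hipos
    apply Real.exp_le_exp.mpr
    nlinarith
  have hexpW_norm : ∀ t : ℝ, 0 ≤ t → ∀ w ∈ Uᗮ,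
      ‖expEnd (t • A) w‖ ≤ Real.exp (-(mm * t)) * ‖w‖ := by
    intro t ht w hw
    refine hnormexp _ _ _ (Real.exp_pos _).le fun i hne => ?_
    have hineg : lam i < 0 := by
      rcases lt_trichotomy (lam i) 0 with h | h | h
      · exact h
      · exact absurd h (hlam_ne i)
      · exact absurd ((hmemUperp w).mp hw i h) hne
    have := hlam_negb i hineg
    apply Real.exp_le_exp.mpr
    nlinarith
  have hexp_inv : ∀ (t : ℝ) (z : E), expEnd (t • A) (expEnd ((-t) • A) z) = z := by
    intro t z
    have h1 : expEnd (t • A) * expEnd ((-t) • A) = 1 := by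
      letI : NormedAlgebra ℚ (E →L[ℝ] E) := NormedAlgebra.restrictScalars ℚ ℝ (E →L[ℝ] E)
      rw [expEnd, expEnd, ← NormedSpace.exp_add_of_commute]
      · rw [← add_smul]
        simp [NormedSpace.exp_zero]
      · have hneg : (-t) • A = -(t • A) := by rw [neg_smul]
        rw [hneg]
        exact (Commute.refl (t • A)).neg_right
    have := congrArg (fun (f : E →L[ℝ] E) => f z) h1
    simpa using this
  rcases K.eq_empty_or_nonempty with hKe | hKne
  · exact ⟨1, one_pos, by simp [hKe]⟩
  have hSne : (projCLM '' K).Nonempty := hKne.image _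
  have hcont : Continuous fun P : E →L[ℝ] E => ‖projCLM U - P * projCLM U‖ :=
    (continuous_const.sub (continuous_mul_right _)).norm
  obtain ⟨P₀, hP₀S, hP₀max⟩ := hKcpt.exists_isMaxOn hSne hcont.continuousOn
  set δ : ℝ := ‖projCLM U - P₀ * projCLM U‖ with hδdef
  have hδ0 : 0 ≤ δ := norm_nonneg _
  have hgapV : ∀ V ∈ K, ‖projCLM U - (projCLM V).comp (projCLM U)‖ ≤ δ :=
    fun V hV => hP₀max (Set.mem_image_of_mem _ hV)
  have hδ1 : δ < 1 := by
    obtain ⟨V₀, hV₀K, hPV₀⟩ := hP₀S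
    set D : E →L[ℝ] E := projCLM U - P₀ * projCLM U with hDdef
    have hball : IsCompact (Metric.closedBall (0:E) 1) := isCompact_closedBall 0 1
    have hbne : (Metric.closedBall (0:E) 1).Nonempty := ⟨0, by simp⟩
    obtain ⟨x₀, hx₀mem, hx₀max⟩ :=
      hball.exists_isMaxOn hbne (continuous_norm.comp D.continuous).continuousOn
    have hDle : δ ≤ ‖D x₀‖ := by
      refine ContinuousLinearMap.opNorm_le_bound D (norm_nonneg _) fun x => ?_
      rcases eq_or_ne x 0 with rfl | hx
      · simp
      · have hxn : 0 < ‖x‖ := norm_pos_iff.mpr hx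
        have hmem : ‖x‖⁻¹ • x ∈ Metric.closedBall (0:E) 1 := by
          simp [norm_smul, abs_of_pos (inv_pos.mpr hxn), inv_mul_cancel₀ hxn.ne']
        have hle : ‖D (‖x‖⁻¹ • x)‖ ≤ ‖D x₀‖ := hx₀max hmem
        rw [map_smul, norm_smul, Real.norm_eq_abs, abs_of_pos (inv_pos.mpr hxn)] at hle
        have hmul := mul_le_mul_of_nonneg_left hle hxn.le
        rw [← mul_assoc, mul_inv_cancel₀ hxn.ne', one_mul] at hmul
        linarith
    by_contra hcon
    push_neg at hcon
    have h1le : (1:ℝ) ≤ ‖D x₀‖ := le_trans hcon hDle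
    set y : E := projCLM U x₀ with hydef
    have hyU : y ∈ U := (orthogonalProjection U x₀).2
    have hDx₀ : D x₀ = y - projCLM V₀ y := by
      rw [hDdef, ← hPV₀]
      rfl
    have hortho : (inner ℝ (projCLM V₀ y) (y - projCLM V₀ y) : ℝ) = 0 := by
      have h1 : y - projCLM V₀ y ∈ V₀ᗮ := sub_starProjection_mem_orthogonal y
      exact (Submodule.mem_orthogonal V₀ _).mp h1 _ (orthogonalProjection V₀ y).2
    have hpyth : ‖y‖^2 = ‖projCLM V₀ y‖^2 + ‖y - projCLM V₀ y‖^2 := by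
      have hh := norm_add_sq_real (projCLM V₀ y) (y - projCLM V₀ y)
      rw [hortho, add_sub_cancel] at hh
      linarith
    have hy1 : ‖y‖ ≤ 1 := by
      have h2 := projCLM_apply_le U x₀
      have hx₀1 : ‖x₀‖ ≤ 1 := by simpa using hx₀mem
      rw [← hydef] at h2
      linarith
    have hPzero : projCLM V₀ y = 0 := by
      have hD1 : 1 ≤ ‖y - projCLM V₀ y‖ := by rw [← hDx₀]; exact h1le
      have hsq1 : 1 ≤ ‖y - projCLM V₀ y‖^2 := by nlinarith [hD1]
      have hysq : ‖y‖^2 ≤ 1 := by nlinarith [hy1, norm_nonneg y]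
      have h2 : ‖projCLM V₀ y‖^2 ≤ 0 := by linarith
      have h3 : ‖projCLM V₀ y‖ ^ 2 = 0 := le_antisymm h2 (sq_nonneg _)
      have h4 : ‖projCLM V₀ y‖ = 0 := by
        exact pow_eq_zero_iff two_ne_zero |>.mp h3
      exact norm_eq_zero.mp h4
    have hyV₀perp : y ∈ V₀ᗮ := by
      rw [← Submodule.orthogonalProjectionOnto_eq_zero_iff (K := V₀)]
      exact Submodule.coe_eq_zero.mp hPzero
    have hy0 : y ∈ (⊥ : Submodule ℝ E) := by
      rw [← hKtrans V₀ hV₀K]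
      exact ⟨hyU, hyV₀perp⟩
    rw [Submodule.mem_bot] at hy0
    rw [hDx₀, hy0] at h1le
    rw [map_zero, sub_zero, norm_zero] at h1le
    linarith
  have hδinv : 0 < (1 - δ)⁻¹ := inv_pos.mpr (by linarith)
  have hsolve : ∀ V ∈ K, ∀ u : E, u ∈ U →
      ∃ v, v ∈ V ∧ ((orthogonalProjection U v : E) = u) ∧ ‖v‖ ≤ (1 - δ)⁻¹ * ‖u‖ := by
    intro V hV u hu
    set TV : U →L[ℝ] U := (orthogonalProjection U).comp ((projCLM V).comp U.subtypeL) with hTVdef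
    set tN : U →L[ℝ] U := 1 - TV with htNdef
    have hzeq : ∀ z : U, projCLM U (z : E) = (z : E) := by
      intro z
      show ((orthogonalProjection U (z:E) : U) : E) = (z : E)
      rw [orthogonalProjection_mem_subspace_eq_self z]
    have htN : ∀ z : U, ‖tN z‖ ≤ δ * ‖z‖ := by
      intro z
      have h1 : ((tN z : U) : E) = (z : E) - (orthogonalProjection U (projCLM V (z : E)) : E) := by
        simp [htNdef, hTVdef, ContinuousLinearMap.sub_apply]
      have h2 : (z : E) - ((orthogonalProjection U (projCLM V (z:E))) : E)
          = projCLM U ((z:E) - projCLM V (z:E)) := by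
        rw [map_sub, hzeq z]
        rfl
      have h3 : ‖tN z‖ = ‖projCLM U ((z:E) - projCLM V (z:E))‖ := by
        rw [show ‖tN z‖ = ‖((tN z : U):E)‖ from rfl, h1, h2]
      rw [h3]
      calc ‖projCLM U ((z:E) - projCLM V (z:E))‖ ≤ ‖(z:E) - projCLM V (z:E)‖ :=
            projCLM_apply_le _ _
        _ = ‖(projCLM U - (projCLM V).comp (projCLM U)) (z:E)‖ := by
            rw [ContinuousLinearMap.sub_apply, ContinuousLinearMap.comp_apply, hzeq z]
        _ ≤ ‖projCLM U - (projCLM V).comp (projCLM U)‖ * ‖(z:E)‖ :=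
            ContinuousLinearMap.le_opNorm _ _
        _ ≤ δ * ‖z‖ := mul_le_mul_of_nonneg_right (hgapV V hV) (norm_nonneg _)
    have htNnorm : ‖tN‖ ≤ δ := ContinuousLinearMap.opNorm_le_bound _ hδ0 htN
    have htNlt : ‖tN‖ < 1 := lt_of_le_of_lt htNnorm hδ1
    have hmul := mul_neg_geom_series tN htNlt
    set y0 : U := (∑' n : ℕ, tN ^ n) ⟨u, hu⟩ with hy0def
    have hTVy : TV y0 = ⟨u, hu⟩ := by
      have hTV1 : TV = 1 - tN := by rw [htNdef, sub_sub_cancel]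
      rw [hTV1, hy0def, ← ContinuousLinearMap.mul_apply, hmul, ContinuousLinearMap.one_apply]
    refine ⟨projCLM V (y0 : E), (orthogonalProjection V ((y0:U) : E)).2, ?_, ?_⟩
    · have h5 : orthogonalProjection U (projCLM V (y0 : E)) = ⟨u, hu⟩ := hTVy
      rw [h5]
    · have hn1 : ‖projCLM V ((y0:U):E)‖ ≤ ‖((y0:U):E)‖ := projCLM_apply_le _ _
      have hn2 : ‖y0‖ ≤ ‖(∑' n : ℕ, tN ^ n)‖ * ‖(⟨u, hu⟩ : U)‖ :=
        ContinuousLinearMap.le_opNorm _ _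
      have hone : ‖(1 : U →L[ℝ] U)‖ ≤ 1 := ContinuousLinearMap.norm_id_le
      have hn3 : ‖∑' n : ℕ, tN ^ n‖ ≤ (1 - ‖tN‖)⁻¹ := by
        have := tsum_geometric_le_of_norm_lt_one tN htNlt
        linarith
      have hn4 : (1 - ‖tN‖)⁻¹ ≤ (1 - δ)⁻¹ := by
        apply inv_anti₀ (by linarith) (by linarith)
      have hcoe : ‖(⟨u, hu⟩ : U)‖ = ‖u‖ := rfl
      have hcoe2 : ‖((y0:U):E)‖ = ‖y0‖ := rfl
      rw [hcoe] at hn2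
      rw [hcoe2] at hn1
      calc ‖projCLM V ((y0:U):E)‖ ≤ ‖y0‖ := hn1
        _ ≤ ‖(∑' n : ℕ, tN ^ n)‖ * ‖u‖ := hn2
        _ ≤ (1 - δ)⁻¹ * ‖u‖ := by
            gcongr
            exact le_trans hn3 hn4
  -- final assembly
  refine ⟨1 + (1 - δ)⁻¹, by positivity, fun V hV t ht => ?_⟩
  unfold gap
  refine ContinuousLinearMap.opNorm_le_bound _ (by positivity) fun x => ?_
  set y : E := projCLM U x with hydef
  have hyU : y ∈ U := (orthogonalProjection U x).2
  have hyx : ‖y‖ ≤ ‖x‖ := projCLM_apply_le U x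
  set u : E := expEnd ((-t) • A) y with hudef
  have huU : u ∈ U := hexpU_mem _ _ hyU
  have hu_le : ‖u‖ ≤ Real.exp (-(mp * t)) * ‖y‖ := hexpU_norm t ht y hyU
  obtain ⟨v, hvV, hvproj, hv_le⟩ := hsolve V hV u huU
  have hwperp : v - u ∈ Uᗮ := by
    rw [← hvproj]
    exact sub_starProjection_mem_orthogonal v
  have hw_le : ‖v - u‖ ≤ (1 + (1 - δ)⁻¹) * ‖u‖ := by
    calc ‖v - u‖ ≤ ‖v‖ + ‖u‖ := norm_sub_le _ _
      _ ≤ (1 - δ)⁻¹ * ‖u‖ + 1 * ‖u‖ := by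
          rw [one_mul]
          gcongr
      _ = (1 + (1 - δ)⁻¹) * ‖u‖ := by ring
  have hvt : expEnd (t • A) v ∈ Submodule.map (expEnd (t • A) : E →ₗ[ℝ] E) V :=
    Submodule.mem_map_of_mem hvV
  have hyv : y - expEnd (t • A) v = - expEnd (t • A) (v - u) := by
    rw [map_sub, hudef, hexp_inv t y]
    abel
  have hmin : ‖y - projCLM (Submodule.map (expEnd (t • A) : E →ₗ[ℝ] E) V) y‖
      ≤ ‖y - expEnd (t • A) v‖ := by
    have h6 : projCLM (Submodule.map (expEnd (t • A) : E →ₗ[ℝ] E) V) y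
        = (Submodule.map (expEnd (t • A) : E →ₗ[ℝ] E) V).starProjection y := rfl
    rw [h6, starProjection_minimal]
    have hbdd : BddBelow (Set.range fun x : Submodule.map (expEnd (t • A) : E →ₗ[ℝ] E) V => ‖y - x‖) := by
      refine ⟨0, fun r hr => ?_⟩
      rcases hr with ⟨z, rfl⟩
      positivity
    exact ciInf_le hbdd (⟨expEnd (t • A) v, hvt⟩ : Submodule.map (expEnd (t • A) : E →ₗ[ℝ] E) V)
  have hLHS : (projCLM U - (projCLM (Submodule.map (expEnd (t • A) : E →ₗ[ℝ] E) V)).comp (projCLM U)) x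
      = y - projCLM (Submodule.map (expEnd (t • A) : E →ₗ[ℝ] E) V) y := by
    rw [ContinuousLinearMap.sub_apply, ContinuousLinearMap.comp_apply]
  rw [hLHS]
  have harg : -(mm * t) + -(mp * t) = -(mp + mm) * t := by ring
  calc ‖y - projCLM (Submodule.map (expEnd (t • A) : E →ₗ[ℝ] E) V) y‖
      ≤ ‖y - expEnd (t • A) v‖ := hmin
    _ = ‖expEnd (t • A) (v - u)‖ := by rw [hyv, norm_neg]
    _ ≤ Real.exp (-(mm * t)) * ‖v - u‖ := hexpW_norm t ht _ hwperp
    _ ≤ Real.exp (-(mm * t)) * ((1 + (1 - δ)⁻¹) * ‖u‖) := by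
        gcongr
    _ ≤ Real.exp (-(mm * t)) * ((1 + (1 - δ)⁻¹) * (Real.exp (-(mp * t)) * ‖y‖)) := by
        gcongr
    _ = (1 + (1 - δ)⁻¹) * (Real.exp (-(mm * t) + -(mp * t)) * ‖y‖) := by
        rw [Real.exp_add]
        ring
    _ = (1 + (1 - δ)⁻¹) * (Real.exp (-(mp + mm) * t) * ‖y‖) := by rw [harg]
    _ ≤ (1 + (1 - δ)⁻¹) * Real.exp (-(mp + mm) * t) * ‖x‖ := by
        rw [mul_assoc]
        gcongr
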